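/- arXiv:1211.1747 — 2 statements merged into one kernel-verified Lean document; each statement's English description precedes it below -/
import Mathlib

section
/- The Wriggle Polynomial W_K(t) = Σ_{c∈C} sign(c)·t^{W(L_c)} − writhe(K) is invariant under the two oriented Reidemeister II moves; that is, the two crossings a, b created by an RII move satisfy sign(a) = −sign(b) and W(L_a) = W(L_b), so their net contribution to the state sum is zero. -/
open scoped Classical
open LaurentPolynomial

noncomputable section

/-- A Gauss diagram for an oriented virtual knot with `n` classical crossings: a circle
with `2 * n` marked points (positions in `ZMod (2*n)`, traversed in cyclic order), and for
each crossing `c` a signed oriented chord, recorded by the position `over c` of its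
over-passage (head), the position `under c` of its under-passage (tail), and its sign. -/
structure GaussDiagram (n : ℕ) where
  overPos : Fin n → ZMod (2 * n)
  under : Fin n → ZMod (2 * n)
  sign : Fin n → ℤ
  endpoints_inj : Function.Injective
    (fun p : Fin n × Bool => if p.2 then overPos p.1 else under p.1)
  sign_pm : ∀ c, sign c = 1 ∨ sign c = -1

namespace GaussDiagram

/-- `x` lies strictly inside the arc running forward (in the orientation of the circle)
from `a` to `b`. -/
def Between {m : ℕ} (a b x : ZMod m) : Prop :=
  (x - a).val < (b - a).val ∧ x ≠ a

variable {n : ℕ}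

/-- After orientedly smoothing the crossing `c`, the first component of the resulting
2-component link `L_c` (the component carrying the dot placed on the incoming understrand
of `c`) is the arc running forward from the over-passage of `c` to its under-passage. -/
def onComp1 (G : GaussDiagram n) (c : Fin n) (x : ZMod (2 * n)) : Prop :=
  Between (G.overPos c) (G.under c) x

/-- The chords `c` and `d` intersect (interleave): exactly one endpoint of `d` lies in the
arc cut out by `c`; equivalently `d` becomes a linking crossing of the smoothed link `L_c`. -/
def Crosses (G : GaussDiagram n) (c d : Fin n) : Prop :=
  Xor' (G.onComp1 c (G.overPos d)) (G.onComp1 c (G.under d))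

/-- `d ∈ P_c`: `d` intersects `c` positively (traveling along the first component of `L_c`
one passes *over* `d`). -/
def PosAt (G : GaussDiagram n) (c d : Fin n) : Prop :=
  G.Crosses c d ∧ G.onComp1 c (G.overPos d)

/-- `d ∈ N_c`: `d` intersects `c` negatively (traveling along the first component of `L_c`
one passes *under* `d`). -/
def NegAt (G : GaussDiagram n) (c d : Fin n) : Prop :=
  G.Crosses c d ∧ G.onComp1 c (G.under d)

/-- The wriggle number `W(L_c) = lk_O(L_c) - lk_U(L_c)` of the ordered 2-component link
obtained by the oriented smoothing at `c`. -/
def wriggle (G : GaussDiagram n) (c : Fin n) : ℤ :=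
  (∑ d ∈ Finset.univ.filter (fun d => G.PosAt c d), G.sign d)
    - ∑ d ∈ Finset.univ.filter (fun d => G.NegAt c d), G.sign d

/-- The writhe: the sum of the signs of all crossings. -/
def writhe (G : GaussDiagram n) : ℤ := ∑ c, G.sign c

/-- The Wriggle Polynomial `W_K(t) = Σ_c sign(c) · t^{W(L_c)} - writhe(K)`, as a Laurent
polynomial over `ℤ`. -/
def wrigglePoly (G : GaussDiagram n) : LaurentPolynomial ℤ :=
  (∑ c, C (G.sign c) * T (G.wriggle c)) - C G.writhe

end GaussDiagram

open GaussDiagram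

/-- invariance of the Wriggle Polynomial under the oriented Reidemeister II
moves.  In Gauss diagram terms, an RII move creates two chords `a, b` of opposite signs
such that every other chord intersects `a` iff it intersects `b`, with the same
intersection sign, while `a` and `b` either do not intersect each other or intersect each
other with the compensating over/under pattern.  Conclusion: `W(L_a) = W(L_b)`, and since
`sign a = - sign b` the two crossings have net contribution zero to the state sum
`Σ_c sign(c) t^{W(L_c)}`. -/
theorem RII_net_contribution_zero {n : ℕ} (G : GaussDiagram n) (a b : Fin n)
    (hab : a ≠ b)
    (hsign : G.sign a = - G.sign b)
    (hpos : ∀ d : Fin n, d ≠ a → d ≠ b → (G.PosAt a d ↔ G.PosAt b d))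
    (hneg : ∀ d : Fin n, d ≠ a → d ≠ b → (G.NegAt a d ↔ G.NegAt b d))
    (hmut : (¬ G.Crosses a b ∧ ¬ G.Crosses b a) ∨
            (G.PosAt a b ∧ G.NegAt b a) ∨ (G.NegAt a b ∧ G.PosAt b a)) :
    G.wriggle a = G.wriggle b ∧
      C (G.sign a) * T (G.wriggle a) + C (G.sign b) * T (G.wriggle b)
        = (0 : LaurentPolynomial ℤ) := by
  -- A chord never crosses itself.
  have hself : ∀ c : Fin n, ¬ G.Crosses c c := by
    intro c hc
    rcases hc with ⟨h1, h2⟩ | ⟨h1, h2⟩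
    · exact h1.2 rfl
    · exact lt_irrefl _ h1.1
  set f : Fin n → Fin n → ℤ := fun c d =>
    (if G.PosAt c d then G.sign d else 0) - (if G.NegAt c d then G.sign d else 0) with hf
  have hwr : ∀ c : Fin n, G.wriggle c = ∑ d, f c d := by
    intro c
    simp [GaussDiagram.wriggle, hf, Finset.sum_sub_distrib, Finset.sum_filter]
  have key : G.wriggle a = G.wriggle b := by
    rw [hwr, hwr]
    refine Fintype.sum_equiv (Equiv.swap a b) _ _ ?_
    intro d
    by_cases hda : d = a
    · rw [hda, Equiv.swap_apply_left]
      have h1 : ¬ G.PosAt a a := fun h => hself a h.1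
      have h2 : ¬ G.NegAt a a := fun h => hself a h.1
      have h3 : ¬ G.PosAt b b := fun h => hself b h.1
      have h4 : ¬ G.NegAt b b := fun h => hself b h.1
      simp [hf, h1, h2, h3, h4]
    by_cases hdb : d = b
    · rw [hdb, Equiv.swap_apply_right]
      rcases hmut with ⟨h1, h2⟩ | ⟨h1, h2⟩ | ⟨h1, h2⟩
      · have p1 : ¬ G.PosAt a b := fun h => h1 h.1
        have p2 : ¬ G.NegAt a b := fun h => h1 h.1
        have p3 : ¬ G.PosAt b a := fun h => h2 h.1
        have p4 : ¬ G.NegAt b a := fun h => h2 h.1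
        simp [hf, p1, p2, p3, p4]
      · have p2 : ¬ G.NegAt a b := by
          intro h
          rcases h1.1 with ⟨x, y⟩ | ⟨x, y⟩
          · exact y h.2
          · exact y h1.2
        have p3 : ¬ G.PosAt b a := by
          intro h
          rcases h2.1 with ⟨x, y⟩ | ⟨x, y⟩
          · exact y h2.2
          · exact y h.2
        simp only [hf, if_pos h1, if_neg p2, if_neg p3, if_pos h2, hsign]
        ring
      · have p1 : ¬ G.PosAt a b := by
          intro h
          rcases h1.1 with ⟨x, y⟩ | ⟨x, y⟩
          · exact y h1.2
          · exact y h.2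
        have p4 : ¬ G.NegAt b a := by
          intro h
          rcases h2.1 with ⟨x, y⟩ | ⟨x, y⟩
          · exact y h.2
          · exact y h2.2
        simp only [hf, if_neg p1, if_pos h1, if_pos h2, if_neg p4, hsign]
        ring
    · rw [Equiv.swap_apply_of_ne_of_ne hda hdb]
      simp only [hf, hpos d hda hdb, hneg d hda hdb]
  refine ⟨key, ?_⟩
  rw [key, hsign, map_neg, neg_mul, neg_add_cancel]
end
end

section
/- Odd virtual knots do not admit non-trivial cosmetic crossing changes: if K_+ and K_− are virtual knot diagrams all of whose crossings are odd, differing only by a crossing change at one crossing, then the Odd Wriggle Polynomials satisfy Ŵ_{K_+}(t) − Ŵ_{K_−}(t) = t^k + t^{−k} ≠ 0 (where k = W(L_{c_1}) for the changed crossing c₁), so K_+ and K_− are not virtually isotopic. -/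
open scoped Classical
open LaurentPolynomial

noncomputable section

namespace GaussDiagram

variable {n : ℕ}

/-- `G'` is obtained from `G` by a crossing change at the crossing `c₁`: the over/under
data at `c₁` is exchanged (the chord is reversed) and its sign is switched, while all
other crossings are unchanged. -/
def IsCrossingChange (G G' : GaussDiagram n) (c₁ : Fin n) : Prop :=
  G'.overPos = Function.update G.overPos c₁ (G.under c₁) ∧
  G'.under = Function.update G.under c₁ (G.overPos c₁) ∧
  G'.sign = Function.update G.sign c₁ (-(G.sign c₁))

/-- A crossing is odd iff the two occurrences of the crossing in the Gauss code are
separated by an odd number of letters, i.e. the forward distance between the two endpoints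
of its chord is even. -/
def OddCrossing (G : GaussDiagram n) (c : Fin n) : Prop :=
  Even ((G.under c - G.overPos c).val)

end GaussDiagram

namespace GaussDiagram

/-- The Odd Wriggle Polynomial `Ŵ_K(t) = Σ_{c odd} sign(c) · t^{W(L_c)}`. -/
def oddWrigglePoly {n : ℕ} (G : GaussDiagram n) : LaurentPolynomial ℤ :=
  ∑ c ∈ Finset.univ.filter (fun c => G.OddCrossing c), C (G.sign c) * T (G.wriggle c)

end GaussDiagram

open GaussDiagram

/- ### Auxiliary lemmas -/

namespace GaussDiagramAux

open GaussDiagram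

variable {n : ℕ}

lemma over_ne_under (G : GaussDiagram n) (c d : Fin n) : G.overPos c ≠ G.under d := by
  intro h
  have h2 := G.endpoints_inj (a₁ := (c, true)) (a₂ := (d, false)) (by simpa using h)
  simpa using congrArg Prod.snd h2

lemma over_inj (G : GaussDiagram n) {c d : Fin n} (h : G.overPos c = G.overPos d) : c = d := by
  have h2 := G.endpoints_inj (a₁ := (c, true)) (a₂ := (d, true)) (by simpa using h)
  simpa using congrArg Prod.fst h2

lemma under_inj (G : GaussDiagram n) {c d : Fin n} (h : G.under c = G.under d) : c = d := by
  have h2 := G.endpoints_inj (a₁ := (c, false)) (a₂ := (d, false)) (by simpa using h)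
  simpa using congrArg Prod.fst h2

/-- On a circle, for `x` distinct from `a` and `b` (themselves distinct), `x` lies on
exactly one of the two arcs cut out by `a` and `b`. -/
lemma between_swap {m : ℕ} [NeZero m] {a b x : ZMod m} (hab : a ≠ b) (hxa : x ≠ a)
    (hxb : x ≠ b) : Between b a x ↔ ¬ Between a b x := by
  have hm : 0 < m := Nat.pos_of_ne_zero (NeZero.ne m)
  set u := (x - a).val with hu
  set s := (b - a).val with hs
  have hu0 : 0 < u := ZMod.val_pos.2 (sub_ne_zero.2 hxa)
  have hs0 : 0 < s := ZMod.val_pos.2 (sub_ne_zero.2 hab.symm)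
  have hum : u < m := ZMod.val_lt _
  have hsm : s < m := ZMod.val_lt _
  have hus : u ≠ s := fun h => hxb (by
    have : x - a = b - a := ZMod.val_injective m h
    exact sub_left_inj.mp this)
  have hab' : (a - b).val = m - s := by
    have : a - b = -(b - a) := by ring
    rw [this, ZMod.neg_val, if_neg (sub_ne_zero.2 hab.symm)]
  have hxb' : (x - b).val = (u + (m - s)) % m := by
    have : x - b = (x - a) + (a - b) := by ring
    rw [this, ZMod.val_add, hab']
  have key : (x - b).val < (a - b).val ↔ ¬ (u < s) := by
    rw [hxb', hab']
    rcases lt_or_gt_of_ne hus with h | h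
    · have : (u + (m - s)) % m = u + (m - s) := Nat.mod_eq_of_lt (by omega)
      omega
    · have : (u + (m - s)) % m = u - s := by
        have he : u + (m - s) = (u - s) + m := by omega
        rw [he, Nat.add_mod_right, Nat.mod_eq_of_lt (by omega)]
      omega
  simp only [Between, ne_eq, hxa, hxb, not_false_iff, and_true]
  exact key

lemma even_val_neg {m : ℕ} [NeZero m] (hm : Even m) (x : ZMod m) :
    Even (-x).val ↔ Even x.val := by
  rcases eq_or_ne x 0 with rfl | hx
  · simp
  · rw [ZMod.neg_val, if_neg hx, Nat.even_sub (le_of_lt (ZMod.val_lt x))]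
    simp [hm]

lemma not_crosses_self (G : GaussDiagram n) (c : Fin n) : ¬ G.Crosses c c := by
  have h1 : ¬ G.onComp1 c (G.overPos c) := fun h => h.2 rfl
  have h2 : ¬ G.onComp1 c (G.under c) := fun h => lt_irrefl _ h.1
  rintro (⟨h, -⟩ | ⟨h, -⟩)
  · exact h1 h
  · exact h2 h

lemma wriggle_eq_sum (G : GaussDiagram n) (c : Fin n) :
    G.wriggle c = ∑ d, ((if G.PosAt c d then G.sign d else 0)
      - (if G.NegAt c d then G.sign d else 0)) := by
  unfold GaussDiagram.wriggle
  rw [Finset.sum_sub_distrib, Finset.sum_filter, Finset.sum_filter]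

lemma T_add_T_neg_ne_zero (k : ℤ) : (T k + T (-k) : LaurentPolynomial ℤ) ≠ 0 := by
  intro h
  have h2 : (T k + T (-k) : LaurentPolynomial ℤ).coeff k = 0 := by rw [h]; rfl
  rw [AddMonoidAlgebra.coeff_add, Finsupp.add_apply, LaurentPolynomial.T_apply, LaurentPolynomial.T_apply] at h2
  rcases eq_or_ne (-k) k with hk | hk
  · rw [if_pos rfl, if_pos hk] at h2; omega
  · rw [if_pos rfl, if_neg hk] at h2; omega

end GaussDiagramAux

open GaussDiagramAux

set_option maxHeartbeats 1000000
/-- Odd virtual knots do not admit non-trivial cosmetic crossing changes.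
If `K₊` and `K₋` are virtual knot diagrams all of whose crossings are odd, differing only
by a crossing change at one crossing `c₁` (at which `K₊` is positive), then letting
`k = W(L_{c₁})`, the Odd Wriggle Polynomials satisfy
`Ŵ_{K₊}(t) - Ŵ_{K₋}(t) = t^k + t^{-k} ≠ 0`; since the Odd Wriggle Polynomial is an
invariant of virtual isotopy, `K₊` and `K₋` are not virtually isotopic. -/
theorem odd_knots_no_cosmetic_crossing_change {n : ℕ} (G G' : GaussDiagram n)
    (c₁ : Fin n)
    (hodd : ∀ c : Fin n, G.OddCrossing c)
    (hcc : GaussDiagram.IsCrossingChange G G' c₁)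
    (hpos : G.sign c₁ = 1)
    (virtIsotopic : (Σ m, GaussDiagram m) → (Σ m, GaussDiagram m) → Prop)
    (hinv : ∀ A B : Σ m, GaussDiagram m,
      virtIsotopic A B → A.2.oddWrigglePoly = B.2.oddWrigglePoly) :
    G.oddWrigglePoly - G'.oddWrigglePoly = T (G.wriggle c₁) + T (-(G.wriggle c₁)) ∧
    G.oddWrigglePoly - G'.oddWrigglePoly ≠ 0 ∧
    ¬ virtIsotopic ⟨n, G⟩ ⟨n, G'⟩ := by
  classical
  haveI : NeZero (2 * n) := ⟨by have := c₁.pos; omega⟩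
  obtain ⟨ho, hu, hs⟩ := hcc
  -- basic facts about the changed diagram
  have ho1 : G'.overPos c₁ = G.under c₁ := by rw [ho]; simp
  have hu1 : G'.under c₁ = G.overPos c₁ := by rw [hu]; simp
  have hs1 : G'.sign c₁ = -(G.sign c₁) := by rw [hs]; simp
  have ho' : ∀ c, c ≠ c₁ → G'.overPos c = G.overPos c := by
    intro c hc; rw [ho]; exact Function.update_of_ne hc _ _
  have hu' : ∀ c, c ≠ c₁ → G'.under c = G.under c := by
    intro c hc; rw [hu]; exact Function.update_of_ne hc _ _
  have hs' : ∀ c, c ≠ c₁ → G'.sign c = G.sign c := by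
    intro c hc; rw [hs]; exact Function.update_of_ne hc _ _
  -- endpoint distinctness
  have hou : G.overPos c₁ ≠ G.under c₁ := over_ne_under G c₁ c₁
  have key : ∀ x : ZMod (2 * n), x ≠ G.overPos c₁ → x ≠ G.under c₁ →
      (Between (G.under c₁) (G.overPos c₁) x ↔ ¬ Between (G.overPos c₁) (G.under c₁) x) :=
    fun x h1 h2 => between_swap hou h1 h2
  -- wriggle numbers at unchanged crossings are unchanged
  have hW : ∀ c, c ≠ c₁ → G'.wriggle c = G.wriggle c := by
    intro c hc
    rw [wriggle_eq_sum, wriggle_eq_sum]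
    refine Finset.sum_congr rfl fun d _ => ?_
    by_cases hd : d = c₁
    · subst hd
      have e1 : G'.PosAt c d ↔ G.NegAt c d := by
        unfold GaussDiagram.PosAt GaussDiagram.NegAt GaussDiagram.Crosses GaussDiagram.onComp1
        rw [ho' c hc, hu' c hc, ho1, hu1]
        unfold Xor' Xor; tauto
      have e2 : G'.NegAt c d ↔ G.PosAt c d := by
        unfold GaussDiagram.PosAt GaussDiagram.NegAt GaussDiagram.Crosses GaussDiagram.onComp1
        rw [ho' c hc, hu' c hc, ho1, hu1]
        unfold Xor' Xor; tauto
      simp only [e1, e2, hs1]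
      split_ifs <;> ring
    · have e1 : G'.PosAt c d ↔ G.PosAt c d := by
        unfold GaussDiagram.PosAt GaussDiagram.Crosses GaussDiagram.onComp1
        rw [ho' c hc, hu' c hc, ho' d hd, hu' d hd]
      have e2 : G'.NegAt c d ↔ G.NegAt c d := by
        unfold GaussDiagram.NegAt GaussDiagram.Crosses GaussDiagram.onComp1
        rw [ho' c hc, hu' c hc, ho' d hd, hu' d hd]
      simp only [e1, e2, hs' d hd]
  -- the wriggle number at the changed crossing is negated
  have hW1 : G'.wriggle c₁ = -(G.wriggle c₁) := by
    rw [wriggle_eq_sum, wriggle_eq_sum, ← Finset.sum_neg_distrib]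
    refine Finset.sum_congr rfl fun d _ => ?_
    by_cases hd : d = c₁
    · subst hd
      have p1 : ¬ G.PosAt d d := fun h => not_crosses_self G d h.1
      have p2 : ¬ G.NegAt d d := fun h => not_crosses_self G d h.1
      have p3 : ¬ G'.PosAt d d := fun h => not_crosses_self G' d h.1
      have p4 : ¬ G'.NegAt d d := fun h => not_crosses_self G' d h.1
      simp [p1, p2, p3, p4]
    · have hdo : G.overPos d ≠ G.overPos c₁ := fun h => hd (over_inj G h)
      have hdu : G.overPos d ≠ G.under c₁ := over_ne_under G d c₁
      have hdo' : G.under d ≠ G.overPos c₁ := fun h => over_ne_under G c₁ d h.symm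
      have hdu' : G.under d ≠ G.under c₁ := fun h => hd (under_inj G h)
      have k1 := key (G.overPos d) hdo hdu
      have k2 := key (G.under d) hdo' hdu'
      have e1 : G'.PosAt c₁ d ↔ G.NegAt c₁ d := by
        unfold GaussDiagram.PosAt GaussDiagram.NegAt GaussDiagram.Crosses GaussDiagram.onComp1
        rw [ho1, hu1, ho' d hd, hu' d hd]
        rw [iff_iff_implies_and_implies] at k1 k2
        unfold Xor' Xor; tauto
      have e2 : G'.NegAt c₁ d ↔ G.PosAt c₁ d := by
        unfold GaussDiagram.PosAt GaussDiagram.NegAt GaussDiagram.Crosses GaussDiagram.onComp1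
        rw [ho1, hu1, ho' d hd, hu' d hd]
        rw [iff_iff_implies_and_implies] at k1 k2
        unfold Xor' Xor; tauto
      simp only [e1, e2, hs' d hd]
      split_ifs <;> ring
  -- all crossings of `G'` are odd as well
  have hodd' : ∀ c, G'.OddCrossing c := by
    intro c
    by_cases hc : c = c₁
    · subst hc
      unfold GaussDiagram.OddCrossing at hodd ⊢
      rw [ho1, hu1]
      have : G.overPos c - G.under c = -(G.under c - G.overPos c) := by ring
      rw [this, even_val_neg ⟨n, by ring⟩]
      exact hodd c
    · unfold GaussDiagram.OddCrossing at hodd ⊢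
      rw [ho' c hc, hu' c hc]
      exact hodd c
  -- the key polynomial identity
  have hmain : G.oddWrigglePoly - G'.oddWrigglePoly
      = T (G.wriggle c₁) + T (-(G.wriggle c₁)) := by
    unfold GaussDiagram.oddWrigglePoly
    rw [Finset.filter_true_of_mem (fun c _ => hodd c),
      Finset.filter_true_of_mem (fun c _ => hodd' c), ← Finset.sum_sub_distrib,
      Finset.sum_eq_single c₁]
    · rw [hs1, hW1, hpos]
      simp only [map_one, map_neg, one_mul, neg_mul, sub_neg_eq_add]
    · intro b _ hb
      rw [hs' b hb, hW b hb, sub_self]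
    · intro h
      exact absurd (Finset.mem_univ c₁) h
  refine ⟨hmain, ?_, ?_⟩
  · rw [hmain]
    exact T_add_T_neg_ne_zero _
  · intro hiso
    have heq := hinv ⟨n, G⟩ ⟨n, G'⟩ hiso
    have hz : G.oddWrigglePoly - G'.oddWrigglePoly = 0 := by
      rw [show G.oddWrigglePoly = G'.oddWrigglePoly from heq, sub_self]
    rw [hmain] at hz
    exact T_add_T_neg_ne_zero _ hz
end
end
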